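/- arXiv:2304.07398 — 5 statements merged into one kernel-verified Lean document; each statement's English description precedes it below -/
import Mathlib

section
/- Let V = (V₋₁ →∂ V₀) be a 2-term cochain complex of k-modules. Define End(V)₀ = {(M,N) ∈ End(V₋₁) × End(V₀) | ∂∘M = N∘∂} with componentwise composition, End(V)₋₁ = Hom(V₀, V₋₁) with product A·A' := A∘∂∘A', δ : End(V)₋₁ → End(V)₀ by δ(A) = (A∘∂, ∂∘A), and bimodule actions (M,N) ▷ A = M∘A and A ◁ (M,N) = A∘N. Then this data forms an associative 2-algebra: δ is an algebra homomorphism, δ is two-sided equivariant (δ((M,N) ▷ A) = (M,N)·δ(A) and δ(A ◁ (M,N)) = δ(A)·(M,N)), and the Peiffer identity δ(A) ▷ A' = A·A' = A ◁ δ(A') holds. -/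
/-- The endomorphism 2-algebra of a 2-term cochain complex `d : V₋₁ → V₀` forms an
associative 2-algebra: with `End(V)₀ = {(M,N) | d∘M = N∘d}`, `End(V)₋₁ = Hom(V₀,V₋₁)`
with product `A·A' = A∘d∘A'`, `δ(A) = (A∘d, d∘A)`, actions `(M,N) ▷ A = M∘A`,
`A ◁ (M,N) = A∘N`, the map `δ` is an algebra homomorphism landing in `End(V)₀`, is
two-sided equivariant, and satisfies the Peiffer identity. -/
theorem end_two_algebra {k Vn V₀ : Type*} [CommRing k]
    [AddCommGroup Vn] [AddCommGroup V₀] [Module k Vn] [Module k V₀]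
    (d : Vn →ₗ[k] V₀) :
    -- the product on End(V)₋₁ is associative
    (∀ A A' A'' : V₀ →ₗ[k] Vn,
        (A ∘ₗ d ∘ₗ A') ∘ₗ d ∘ₗ A'' = A ∘ₗ d ∘ₗ (A' ∘ₗ d ∘ₗ A'')) ∧
    -- δ lands in End(V)₀
    (∀ A : V₀ →ₗ[k] Vn, d ∘ₗ (A ∘ₗ d) = (d ∘ₗ A) ∘ₗ d) ∧
    -- δ is an algebra homomorphism
    (∀ A A' : V₀ →ₗ[k] Vn,
        (((A ∘ₗ d ∘ₗ A') ∘ₗ d, d ∘ₗ (A ∘ₗ d ∘ₗ A')) :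
            (Vn →ₗ[k] Vn) × (V₀ →ₗ[k] V₀))
          = ((A ∘ₗ d) ∘ₗ (A' ∘ₗ d), (d ∘ₗ A) ∘ₗ (d ∘ₗ A'))) ∧
    -- δ is two-sided equivariant
    (∀ (M : Vn →ₗ[k] Vn) (N : V₀ →ₗ[k] V₀), d ∘ₗ M = N ∘ₗ d →
      ∀ A : V₀ →ₗ[k] Vn,
        ((((M ∘ₗ A) ∘ₗ d, d ∘ₗ (M ∘ₗ A)) : (Vn →ₗ[k] Vn) × (V₀ →ₗ[k] V₀))
            = (M ∘ₗ (A ∘ₗ d), N ∘ₗ (d ∘ₗ A))) ∧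
        ((((A ∘ₗ N) ∘ₗ d, d ∘ₗ (A ∘ₗ N)) : (Vn →ₗ[k] Vn) × (V₀ →ₗ[k] V₀))
            = ((A ∘ₗ d) ∘ₗ M, (d ∘ₗ A) ∘ₗ N))) ∧
    -- Peiffer identity
    (∀ A A' : V₀ →ₗ[k] Vn,
        (A ∘ₗ d) ∘ₗ A' = A ∘ₗ d ∘ₗ A' ∧ A ∘ₗ (d ∘ₗ A') = A ∘ₗ d ∘ₗ A') := by
  refine ⟨fun A A' A'' => by ext x; simp, fun A => by ext x; simp,
    fun A A' => by simp [Prod.ext_iff]; constructor <;> ext x <;> simp,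
    fun M N h A => ?_, fun A A' => ⟨by ext x; simp, by ext x; simp⟩⟩
  have h' : ∀ x, d (M x) = N (d x) := fun x => congrFun (congrArg DFunLike.coe h) x
  constructor <;> (simp only [Prod.ext_iff]; constructor <;> ext x <;> simp [h'])
end

section
/- Lie-ification of an associative 2-algebra yields a differential crossed module of Lie algebras: given an associative 2-algebra t : G₋₁ → G₀, equip G₀ with the commutator bracket [x,x'] = x·x' − x'·x, G₋₁ with the commutator bracket [y,y'] = y·y' − y'·y, and define the action x ▹ y := x ▷ y − y ◁ x. Then t is a Lie algebra homomorphism, x ↦ (x ▹ −) is an action by derivations satisfying [x,x'] ▹ y = x ▹ (x' ▹ y) − x' ▹ (x ▹ y), and the Lie equivariance t(x ▹ y) = [x, t(y)] and Lie–Peiffer identity t(y) ▹ y' = [y, y'] hold. -/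
structure AssocTwoAlgebra (k : Type*) [CommRing k] (G₀ G₁ : Type*)
    [NonUnitalRing G₀] [NonUnitalRing G₁] [Module k G₀] [Module k G₁] where
  t : G₁ →ₗ[k] G₀
  t_mul : ∀ y y' : G₁, t (y * y') = t y * t y'
  actL : G₀ →ₗ[k] G₁ →ₗ[k] G₁
  actR : G₁ →ₗ[k] G₀ →ₗ[k] G₁
  actL_mul : ∀ (x x' : G₀) (y : G₁), actL (x * x') y = actL x (actL x' y)
  actLR : ∀ (x : G₀) (y : G₁) (x' : G₀), actR (actL x y) x' = actL x (actR y x')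
  actR_mul : ∀ (y : G₁) (x x' : G₀), actR y (x * x') = actR (actR y x) x'
  equivL : ∀ (x : G₀) (y : G₁), t (actL x y) = x * t y
  equivR : ∀ (y : G₁) (x : G₀), t (actR y x) = t y * x
  peifferL : ∀ y y' : G₁, actL (t y) y' = y * y'
  peifferR : ∀ y y' : G₁, actR y (t y') = y * y'


section helpers
variable {k G₀ G₁ : Type*} [CommRing k]
  [NonUnitalRing G₀] [NonUnitalRing G₁] [Module k G₀] [Module k G₁]
  (A : AssocTwoAlgebra k G₀ G₁)

lemma aux_h1 (x : G₀) (y y' : G₁) : A.actL x (y * y') = A.actL x y * y' := by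
  rw [← A.peifferL y y', ← A.actL_mul, ← A.equivL, A.peifferL]

lemma aux_h3 (x : G₀) (y y' : G₁) : A.actR (y * y') x = y * A.actR y' x := by
  rw [← A.peifferR y y', ← A.actR_mul, ← A.equivR, A.peifferR]

lemma aux_h4 (x : G₀) (y y' : G₁) : A.actR y' x * y = y' * A.actL x y := by
  rw [← A.peifferL (A.actR y' x) y, A.equivR, A.actL_mul, A.peifferL]

end helpers

/-- Lie-ification of an associative 2-algebra yields a differential crossed module of
Lie algebras: with commutator brackets on `G₀` and `G₁` and the action
`x ▹ y := x ▷ y − y ◁ x`, the map `t` is a Lie algebra homomorphism, the action is a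
Lie-algebra action by derivations, and the Lie equivariance and Lie–Peiffer identities
hold. -/
theorem lieification {k G₀ G₁ : Type*} [CommRing k]
    [NonUnitalRing G₀] [NonUnitalRing G₁] [Module k G₀] [Module k G₁]
    (A : AssocTwoAlgebra k G₀ G₁) :
    -- t is a Lie algebra homomorphism for the commutator brackets
    (∀ y y' : G₁, A.t (y * y' - y' * y) = A.t y * A.t y' - A.t y' * A.t y) ∧
    -- Lie-algebra action: [x,x'] ▹ y = x ▹ (x' ▹ y) − x' ▹ (x ▹ y)
    (∀ (x x' : G₀) (y : G₁),
      A.actL (x * x' - x' * x) y - A.actR y (x * x' - x' * x)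
        = (A.actL x (A.actL x' y - A.actR y x') - A.actR (A.actL x' y - A.actR y x') x)
          - (A.actL x' (A.actL x y - A.actR y x) - A.actR (A.actL x y - A.actR y x) x')) ∧
    -- the action is by derivations of the commutator bracket on G₁
    (∀ (x : G₀) (y y' : G₁),
      A.actL x (y * y' - y' * y) - A.actR (y * y' - y' * y) x
        = ((A.actL x y - A.actR y x) * y' - y' * (A.actL x y - A.actR y x))
          + (y * (A.actL x y' - A.actR y' x) - (A.actL x y' - A.actR y' x) * y)) ∧
    -- Lie equivariance: t(x ▹ y) = [x, t y]
    (∀ (x : G₀) (y : G₁), A.t (A.actL x y - A.actR y x) = x * A.t y - A.t y * x) ∧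
    -- Lie–Peiffer identity: t(y) ▹ y' = [y, y']
    (∀ y y' : G₁, A.actL (A.t y) y' - A.actR y' (A.t y) = y * y' - y' * y) := by
  refine ⟨fun y y' => by simp [A.t_mul], fun x x' y => ?_, fun x y y' => ?_,
    fun x y => by simp [A.equivL, A.equivR], fun y y' => by simp [A.peifferL, A.peifferR]⟩
  · simp only [map_sub, LinearMap.sub_apply, A.actL_mul, A.actR_mul, A.actLR]
    abel
  · simp only [map_sub, LinearMap.sub_apply, aux_h1, aux_h3, sub_mul, mul_sub, aux_h4]
    abel
end

section
/- Let (G, Δ, R) be a strict quasitriangular 2-bialgebra with 2-R-matrix components Rˡ ∈ G₋₁⊗G₀, Rʳ ∈ G₀⊗G₋₁ satisfying the equivariance condition (t⊗id)Rˡ = (id⊗t)Rʳ =: R ∈ G₀⊗G₀. Then R satisfies the ordinary quasitriangular coproduct identities for the degree-0 bialgebra (G₀, Δ₀'): (Δ₀' ⊗ id)(R) = R₁₃·R₂₃ and (id ⊗ Δ₀')(R) = R₁₃·R₁₂ in G₀⊗G₀⊗G₀. -/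
open scoped TensorProduct

noncomputable section

variable (k : Type*) [CommRing k]

section Legs

variable (G₀ G₁ : Type*) [Ring G₀] [Algebra k G₀]
  [NonUnitalRing G₁] [Module k G₁]

/-- place an element of `G₁ ⊗ G₀` in legs 1,3 (unit of `G₀` in leg 2). -/
def legL13 : G₁ ⊗[k] G₀ →ₗ[k] G₁ ⊗[k] (G₀ ⊗[k] G₀) :=
  TensorProduct.map LinearMap.id (TensorProduct.mk k G₀ G₀ 1)

/-- place an element of `G₁ ⊗ G₀` in legs 1,2 (unit of `G₀` in leg 3). -/
def legL12 : G₁ ⊗[k] G₀ →ₗ[k] G₁ ⊗[k] (G₀ ⊗[k] G₀) :=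
  TensorProduct.map LinearMap.id ((TensorProduct.mk k G₀ G₀).flip 1)

/-- place an element of `G₁ ⊗ G₀` in legs 2,3 (unit of `G₀` in leg 1). -/
def legL23 : G₁ ⊗[k] G₀ →ₗ[k] G₀ ⊗[k] (G₁ ⊗[k] G₀) :=
  TensorProduct.mk k G₀ (G₁ ⊗[k] G₀) 1

/-- place an element of `G₀ ⊗ G₁` in legs 1,3 (unit of `G₀` in leg 2). -/
def legR13 : G₀ ⊗[k] G₁ →ₗ[k] G₀ ⊗[k] (G₀ ⊗[k] G₁) :=
  TensorProduct.map LinearMap.id (TensorProduct.mk k G₀ G₁ 1)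

/-- place an element of `G₀ ⊗ G₁` in legs 1,2 (unit of `G₀` in leg 3). -/
def legR12 : G₀ ⊗[k] G₁ →ₗ[k] G₀ ⊗[k] (G₁ ⊗[k] G₀) :=
  TensorProduct.map LinearMap.id ((TensorProduct.mk k G₁ G₀).flip 1)

/-- place an element of `G₀ ⊗ G₁` in legs 2,3 (unit of `G₀` in leg 1). -/
def legR23 : G₀ ⊗[k] G₁ →ₗ[k] G₀ ⊗[k] (G₀ ⊗[k] G₁) :=
  TensorProduct.mk k G₀ (G₀ ⊗[k] G₁) 1

/-- leg placements of an element of `G₀ ⊗ G₀` inside `G₀ ⊗ (G₀ ⊗ G₀)`. -/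
def leg012 : G₀ ⊗[k] G₀ →ₗ[k] G₀ ⊗[k] (G₀ ⊗[k] G₀) :=
  TensorProduct.map LinearMap.id ((TensorProduct.mk k G₀ G₀).flip 1)

def leg013 : G₀ ⊗[k] G₀ →ₗ[k] G₀ ⊗[k] (G₀ ⊗[k] G₀) :=
  TensorProduct.map LinearMap.id (TensorProduct.mk k G₀ G₀ 1)

def leg023 : G₀ ⊗[k] G₀ →ₗ[k] G₀ ⊗[k] (G₀ ⊗[k] G₀) :=
  TensorProduct.mk k G₀ (G₀ ⊗[k] G₀) 1

end Legs

section Aux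

variable {G₀ G₁ : Type*} [Ring G₀] [Algebra k G₀]
    [NonUnitalRing G₁] [Module k G₁] [SMulCommClass k G₁ G₁] [IsScalarTower k G₁ G₁]
    (A : AssocTwoAlgebra k G₀ G₁)

lemma aux_inner1 (m : G₀ ⊗[k] G₀) (n : G₀ ⊗[k] G₁) :
    TensorProduct.map LinearMap.id A.t
      (TensorProduct.map₂ (LinearMap.mul k G₀) A.actL m n)
      = m * TensorProduct.map LinearMap.id A.t n := by
  induction m using TensorProduct.induction_on with
  | zero => simp
  | tmul p q =>
    rw [TensorProduct.map₂_apply_tmul]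
    induction n using TensorProduct.induction_on with
    | zero => simp
    | tmul u v =>
      simp [A.equivL, Algebra.TensorProduct.tmul_mul_tmul]
    | add n₁ n₂ ih₁ ih₂ => simp [map_add, mul_add, ih₁, ih₂]
  | add m₁ m₂ ih₁ ih₂ =>
    simp only [map_add, LinearMap.add_apply, add_mul, ih₁, ih₂]

lemma aux_inner2 (m : G₀ ⊗[k] G₀) (n : G₁ ⊗[k] G₀) :
    TensorProduct.map A.t LinearMap.id
      (TensorProduct.map₂ A.actL (LinearMap.mul k G₀) m n)
      = m * TensorProduct.map A.t LinearMap.id n := by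
  induction m using TensorProduct.induction_on with
  | zero => simp
  | tmul p q =>
    rw [TensorProduct.map₂_apply_tmul]
    induction n using TensorProduct.induction_on with
    | zero => simp
    | tmul u v =>
      simp [A.equivL, Algebra.TensorProduct.tmul_mul_tmul]
    | add n₁ n₂ ih₁ ih₂ => simp [map_add, mul_add, ih₁, ih₂]
  | add m₁ m₂ ih₁ ih₂ =>
    simp only [map_add, LinearMap.add_apply, add_mul, ih₁, ih₂]

lemma aux_top1 (a : G₁ ⊗[k] (G₀ ⊗[k] G₀)) (b : G₀ ⊗[k] (G₀ ⊗[k] G₁)) :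
    TensorProduct.map A.t (TensorProduct.map LinearMap.id A.t)
      (TensorProduct.map₂ A.actR
        (TensorProduct.map₂ (LinearMap.mul k G₀) A.actL) a b)
      = TensorProduct.map A.t LinearMap.id a
        * TensorProduct.map LinearMap.id (TensorProduct.map LinearMap.id A.t) b := by
  induction a using TensorProduct.induction_on with
  | zero => simp
  | tmul y m =>
    rw [TensorProduct.map₂_apply_tmul]
    induction b using TensorProduct.induction_on with
    | zero => simp
    | tmul x n =>
      simp [A.equivR, aux_inner1, Algebra.TensorProduct.tmul_mul_tmul]
    | add b₁ b₂ ih₁ ih₂ => simp [map_add, mul_add, ih₁, ih₂]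
  | add a₁ a₂ ih₁ ih₂ =>
    simp only [map_add, LinearMap.add_apply, add_mul, ih₁, ih₂]

lemma aux_top2 (a : G₁ ⊗[k] (G₀ ⊗[k] G₀)) (b : G₀ ⊗[k] (G₁ ⊗[k] G₀)) :
    TensorProduct.map A.t (TensorProduct.map A.t LinearMap.id)
      (TensorProduct.map₂ A.actR
        (TensorProduct.map₂ A.actL (LinearMap.mul k G₀)) a b)
      = TensorProduct.map A.t LinearMap.id a
        * TensorProduct.map LinearMap.id (TensorProduct.map A.t LinearMap.id) b := by
  induction a using TensorProduct.induction_on with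
  | zero => simp
  | tmul y m =>
    rw [TensorProduct.map₂_apply_tmul]
    induction b using TensorProduct.induction_on with
    | zero => simp
    | tmul x n =>
      simp [A.equivR, aux_inner2, Algebra.TensorProduct.tmul_mul_tmul]
    | add b₁ b₂ ih₁ ih₂ => simp [map_add, mul_add, ih₁, ih₂]
  | add a₁ a₂ ih₁ ih₂ =>
    simp only [map_add, LinearMap.add_apply, add_mul, ih₁, ih₂]

lemma aux_legL13 (x : G₁ ⊗[k] G₀) :
    TensorProduct.map A.t LinearMap.id (legL13 k G₀ G₁ x)
      = leg013 k G₀ (TensorProduct.map A.t LinearMap.id x) := by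
  induction x using TensorProduct.induction_on with
  | zero => simp
  | tmul y p => simp [legL13, leg013]
  | add x₁ x₂ ih₁ ih₂ => simp [map_add, ih₁, ih₂]

lemma aux_legR23 (x : G₀ ⊗[k] G₁) :
    TensorProduct.map LinearMap.id (TensorProduct.map LinearMap.id A.t)
        (legR23 k G₀ G₁ x)
      = leg023 k G₀ (TensorProduct.map LinearMap.id A.t x) := by
  simp [legR23, leg023]

lemma aux_legR12 (x : G₀ ⊗[k] G₁) :
    TensorProduct.map LinearMap.id (TensorProduct.map A.t LinearMap.id)
        (legR12 k G₀ G₁ x)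
      = leg012 k G₀ (TensorProduct.map LinearMap.id A.t x) := by
  induction x using TensorProduct.induction_on with
  | zero => simp
  | tmul p y => simp [legR12, leg012]
  | add x₁ x₂ ih₁ ih₂ => simp [map_add, ih₁, ih₂]

lemma aux_lhs1 (Δl : G₀ →ₗ[k] G₁ ⊗[k] G₀) (x : G₀ ⊗[k] G₁) :
    (TensorProduct.assoc k G₀ G₀ G₀)
        (TensorProduct.map (TensorProduct.map A.t LinearMap.id ∘ₗ Δl) LinearMap.id
          (TensorProduct.map LinearMap.id A.t x))
      = TensorProduct.map A.t (TensorProduct.map LinearMap.id A.t)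
          ((TensorProduct.assoc k G₁ G₀ G₁)
            (TensorProduct.map Δl LinearMap.id x)) := by
  induction x using TensorProduct.induction_on with
  | zero => simp only [LinearMap.map_zero, LinearEquiv.map_zero]
  | tmul p y =>
    simp [TensorProduct.map_tmul, TensorProduct.map_map_assoc]
  | add x₁ x₂ ih₁ ih₂ => simp only [map_add, ih₁, ih₂]

lemma aux_lhs2 (Δl : G₀ →ₗ[k] G₁ ⊗[k] G₀) (x : G₁ ⊗[k] G₀) :
    TensorProduct.map LinearMap.id (TensorProduct.map A.t LinearMap.id ∘ₗ Δl)
        (TensorProduct.map A.t LinearMap.id x)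
      = TensorProduct.map A.t (TensorProduct.map A.t LinearMap.id)
          (TensorProduct.map LinearMap.id Δl x) := by
  rw [← LinearMap.comp_apply, ← LinearMap.comp_apply,
    ← TensorProduct.map_comp, ← TensorProduct.map_comp]
  simp

end Aux

/-- For a strict quasitriangular 2-bialgebra, the degree-0 element
`R = (t⊗id)Rˡ = (id⊗t)Rʳ` satisfies the ordinary quasitriangular coproduct identities
`(Δ₀'⊗id)(R) = R₁₃·R₂₃` and `(id⊗Δ₀')(R) = R₁₃·R₁₂` for the degree-0 bialgebra
`(G₀, Δ₀')`. -/
theorem deg0_quasitriangular {G₀ G₁ : Type*} [Ring G₀] [Algebra k G₀]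
    [NonUnitalRing G₁] [Module k G₁] [SMulCommClass k G₁ G₁] [IsScalarTower k G₁ G₁]
    (A : AssocTwoAlgebra k G₀ G₁)
    (Δl : G₀ →ₗ[k] G₁ ⊗[k] G₀) (Δr : G₀ →ₗ[k] G₀ ⊗[k] G₁)
    -- coPeiffer identity
    (hco : TensorProduct.map A.t LinearMap.id ∘ₗ Δl
            = TensorProduct.map LinearMap.id A.t ∘ₗ Δr)
    (Rl : G₁ ⊗[k] G₀) (Rr : G₀ ⊗[k] G₁)
    -- equivariance: (t⊗id)Rˡ = (id⊗t)Rʳ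
    (hequiv : TensorProduct.map A.t LinearMap.id Rl
              = TensorProduct.map LinearMap.id A.t Rr)
    -- compatibility with the coproduct:
    -- (Δ₀ˡ⊗id)Rʳ = Rˡ₁₃ ▷ Rʳ₂₃
    (h1 : (TensorProduct.assoc k G₁ G₀ G₁)
            (TensorProduct.map Δl LinearMap.id Rr)
          = TensorProduct.map₂ A.actR
              (TensorProduct.map₂ (LinearMap.mul k G₀) A.actL)
              (legL13 k G₀ G₁ Rl) (legR23 k G₀ G₁ Rr))
    -- (Δ₀ʳ⊗id)Rʳ = Rʳ₁₃ ◁ Rˡ₂₃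
    (h2 : (TensorProduct.assoc k G₀ G₁ G₁)
            (TensorProduct.map Δr LinearMap.id Rr)
          = TensorProduct.map₂ (LinearMap.mul k G₀)
              (TensorProduct.map₂ A.actL A.actR)
              (legR13 k G₀ G₁ Rr) (legL23 k G₀ G₁ Rl))
    -- (id⊗Δ₀ˡ)Rˡ = Rˡ₁₃ ◁ Rʳ₁₂
    (h3 : TensorProduct.map LinearMap.id Δl Rl
          = TensorProduct.map₂ A.actR
              (TensorProduct.map₂ A.actL (LinearMap.mul k G₀))
              (legL13 k G₀ G₁ Rl) (legR12 k G₀ G₁ Rr))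
    -- (id⊗Δ₀ʳ)Rˡ = Rʳ₁₃ ▷ Rˡ₁₂
    (h4 : TensorProduct.map LinearMap.id Δr Rl
          = TensorProduct.map₂ A.actL
              (TensorProduct.map₂ (LinearMap.mul k G₀) A.actR)
              (legR13 k G₀ G₁ Rr) (legL12 k G₀ G₁ Rl)) :
    -- conclusion: with R = (t⊗id)Rˡ and Δ₀' = (t⊗id)∘Δ₀ˡ,
    -- (Δ₀'⊗id)(R) = R₁₃·R₂₃ and (id⊗Δ₀')(R) = R₁₃·R₁₂
    (TensorProduct.assoc k G₀ G₀ G₀)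
        (TensorProduct.map (TensorProduct.map A.t LinearMap.id ∘ₗ Δl) LinearMap.id
          (TensorProduct.map A.t LinearMap.id Rl))
      = leg013 k G₀ (TensorProduct.map A.t LinearMap.id Rl)
        * leg023 k G₀ (TensorProduct.map A.t LinearMap.id Rl) ∧
    TensorProduct.map LinearMap.id (TensorProduct.map A.t LinearMap.id ∘ₗ Δl)
        (TensorProduct.map A.t LinearMap.id Rl)
      = leg013 k G₀ (TensorProduct.map A.t LinearMap.id Rl)
        * leg012 k G₀ (TensorProduct.map A.t LinearMap.id Rl) := by
  constructor
  · have key := congrArg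
      (TensorProduct.map A.t (TensorProduct.map LinearMap.id A.t)) h1
    rw [aux_top1, aux_legL13, aux_legR23] at key
    rw [hequiv, aux_lhs1, key, ← hequiv]
  · have key := congrArg
      (TensorProduct.map A.t (TensorProduct.map A.t LinearMap.id)) h3
    rw [aux_top2, aux_legL13, aux_legR12] at key
    rw [aux_lhs2, key, ← hequiv]

end
end

section
/- Let (G, Δ, R) be a strict quasitriangular 2-bialgebra with 2-R-matrix components satisfying the coproduct permutation identities Rʳ·Δ₀ʳ(x) = (σ∘Δ₀ˡ(x))·Rʳ and Rˡ·Δ₀ˡ(x) = (σ∘Δ₀ʳ(x))·Rˡ for all x ∈ G₀. Then the induced degree-0 element R = (t⊗id)Rˡ = (id⊗t)Rʳ ∈ G₀⊗G₀ intertwines the degree-0 coproduct with its opposite: R·Δ₀'(x) = (σ∘Δ₀'(x))·R for all x ∈ G₀, where σ is the flip of tensor factors on G₀⊗G₀. -/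
open scoped TensorProduct

noncomputable section

lemma map_id_t_mul {k G₀ G₁ : Type*} [CommRing k]
    [NonUnitalRing G₀] [NonUnitalRing G₁] [Module k G₀] [Module k G₁]
    [SMulCommClass k G₀ G₀] [IsScalarTower k G₀ G₀]
    [SMulCommClass k G₁ G₁] [IsScalarTower k G₁ G₁]
    (A : AssocTwoAlgebra k G₀ G₁) (a b : G₀ ⊗[k] G₁) :
    TensorProduct.map LinearMap.id A.t
        (TensorProduct.map₂ (LinearMap.mul k G₀) (LinearMap.mul k G₁) a b)
      = TensorProduct.map₂ (LinearMap.mul k G₀) (LinearMap.mul k G₀)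
          (TensorProduct.map LinearMap.id A.t a)
          (TensorProduct.map LinearMap.id A.t b) := by
  induction a using TensorProduct.induction_on with
  | zero => simp
  | add a a' ha ha' => simp [map_add, ha, ha']
  | tmul x y =>
    induction b using TensorProduct.induction_on with
    | zero => simp
    | add b b' hb hb' => simp only [map_add, hb, hb']
    | tmul x' y' => simp [TensorProduct.map₂, A.t_mul]

/-- In a strict quasitriangular 2-bialgebra, the coproduct permutation identities for
the 2-R-matrix components imply that the induced degree-0 element
`R = (t⊗id)Rˡ = (id⊗t)Rʳ` intertwines the degree-0 coproduct with its opposite: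
`R·Δ₀'(x) = (σ∘Δ₀'(x))·R` for all `x ∈ G₀`. -/
theorem deg0_R_intertwines {k G₀ G₁ : Type*} [CommRing k]
    [NonUnitalRing G₀] [NonUnitalRing G₁] [Module k G₀] [Module k G₁]
    [SMulCommClass k G₀ G₀] [IsScalarTower k G₀ G₀]
    [SMulCommClass k G₁ G₁] [IsScalarTower k G₁ G₁]
    (A : AssocTwoAlgebra k G₀ G₁)
    (Δl : G₀ →ₗ[k] G₁ ⊗[k] G₀) (Δr : G₀ →ₗ[k] G₀ ⊗[k] G₁)
    -- coPeiffer identity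
    (hco : TensorProduct.map A.t LinearMap.id ∘ₗ Δl
            = TensorProduct.map LinearMap.id A.t ∘ₗ Δr)
    (Rl : G₁ ⊗[k] G₀) (Rr : G₀ ⊗[k] G₁)
    -- equivariance condition
    (hequiv : TensorProduct.map A.t LinearMap.id Rl
              = TensorProduct.map LinearMap.id A.t Rr)
    -- coproduct permutation identities (products factorwise)
    (hperm1 : ∀ x : G₀,
      TensorProduct.map₂ (LinearMap.mul k G₀) (LinearMap.mul k G₁) Rr (Δr x)
        = TensorProduct.map₂ (LinearMap.mul k G₀) (LinearMap.mul k G₁)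
            ((TensorProduct.comm k G₁ G₀) (Δl x)) Rr)
    (hperm2 : ∀ x : G₀,
      TensorProduct.map₂ (LinearMap.mul k G₁) (LinearMap.mul k G₀) Rl (Δl x)
        = TensorProduct.map₂ (LinearMap.mul k G₁) (LinearMap.mul k G₀)
            ((TensorProduct.comm k G₀ G₁) (Δr x)) Rl) :
    ∀ x : G₀,
      TensorProduct.map₂ (LinearMap.mul k G₀) (LinearMap.mul k G₀)
          (TensorProduct.map LinearMap.id A.t Rr)
          (TensorProduct.map A.t LinearMap.id (Δl x))
        = TensorProduct.map₂ (LinearMap.mul k G₀) (LinearMap.mul k G₀)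
            ((TensorProduct.comm k G₀ G₀)
              (TensorProduct.map A.t LinearMap.id (Δl x)))
            (TensorProduct.map LinearMap.id A.t Rr) := by
  intro x
  have key := congrArg (TensorProduct.map (LinearMap.id : G₀ →ₗ[k] G₀) A.t) (hperm1 x)
  rw [map_id_t_mul, map_id_t_mul] at key
  have hco' : TensorProduct.map LinearMap.id A.t (Δr x)
      = TensorProduct.map A.t LinearMap.id (Δl x) :=
    (LinearMap.congr_fun hco x).symm
  rw [hco', TensorProduct.map_comm] at key
  exact key

end
end

section
/- In a strict 2-Hopf algebra, the degree-0 data (G₀, Δ₀', S₀⁰, η₀, ε₀) forms a Hopf algebra: μ∘(id⊗S₀⁰)∘Δ₀' = η₀∘ε₀ = μ∘(S₀⁰⊗id)∘Δ₀' on G₀, derived from the antipode conditions on the graded coproduct components together with t∘η₋₁ = η₀, ε₀ = ε₋₁∘t, S₀⁰∘t = t∘S₀¹, the equivariance of t, and the coPeiffer identity Δ₀' = ½(t⊗1 + 1⊗t)Δ₀ (equivalently Δ₀' = (t⊗id)Δ₀ˡ = (id⊗t)Δ₀ʳ). -/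
open scoped TensorProduct

noncomputable section

/-- In a strict 2-Hopf algebra, the degree-0 data `(G₀, Δ₀', S₀⁰, η₀, ε₀)` forms a Hopf
algebra: `μ∘(id⊗S₀⁰)∘Δ₀' = η₀·ε₀ = μ∘(S₀⁰⊗id)∘Δ₀'` on `G₀`. -/
theorem deg0_hopf {k G₀ G₁ : Type*} [CommRing k]
    [NonUnitalRing G₀] [NonUnitalRing G₁] [Module k G₀] [Module k G₁]
    [SMulCommClass k G₀ G₀] [IsScalarTower k G₀ G₀]
    (A : AssocTwoAlgebra k G₀ G₁)
    (Δl : G₀ →ₗ[k] G₁ ⊗[k] G₀) (Δr : G₀ →ₗ[k] G₀ ⊗[k] G₁)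
    -- units
    (η₁ : G₁) (η₀ : G₀) (hη : A.t η₁ = η₀)
    (hunit0 : ∀ x : G₀, η₀ * x = x ∧ x * η₀ = x)
    (hunit1 : ∀ y : G₁, η₁ * y = y ∧ y * η₁ = y)
    (hunitAct : ∀ y : G₁, A.actL η₀ y = y ∧ A.actR y η₀ = y)
    -- counits, with ε respecting the t-map
    (ε₀ : G₀ →ₗ[k] k) (ε₁ : G₁ →ₗ[k] k) (hε : ε₁ = ε₀ ∘ₗ A.t)
    -- the antipode intertwines the t-map
    (S0 : G₀ →ₗ[k] G₀) (S1 : G₁ →ₗ[k] G₁) (hS : S0 ∘ₗ A.t = A.t ∘ₗ S1)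
    -- coPeiffer identity
    (hco : TensorProduct.map A.t LinearMap.id ∘ₗ Δl
            = TensorProduct.map LinearMap.id A.t ∘ₗ Δr)
    -- antipode conditions on the graded coproduct components
    -- μ∘(id⊗S₀⁰)∘Δ₀ˡ = η₋₁·ε₀
    (hant1 : ∀ x : G₀, TensorProduct.lift (A.actR.compl₂ S0) (Δl x) = ε₀ x • η₁)
    -- μ∘(S₀¹⊗id)∘Δ₀ˡ = η₋₁·ε₀
    (hant2 : ∀ x : G₀, TensorProduct.lift (A.actR ∘ₗ S1) (Δl x) = ε₀ x • η₁)
    -- μ∘(id⊗S₀¹)∘Δ₀ʳ = η₋₁·ε₀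
    (hant3 : ∀ x : G₀, TensorProduct.lift (A.actL.compl₂ S1) (Δr x) = ε₀ x • η₁)
    -- μ∘(S₀⁰⊗id)∘Δ₀ʳ = η₋₁·ε₀
    (hant4 : ∀ x : G₀, TensorProduct.lift (A.actL ∘ₗ S0) (Δr x) = ε₀ x • η₁) :
    -- conclusion: (G₀, Δ₀', S₀⁰, η₀, ε₀) is a Hopf algebra
    ∀ x : G₀,
      TensorProduct.lift (LinearMap.mul k G₀)
          (TensorProduct.map LinearMap.id S0
            (TensorProduct.map A.t LinearMap.id (Δl x))) = ε₀ x • η₀ ∧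
      TensorProduct.lift (LinearMap.mul k G₀)
          (TensorProduct.map S0 LinearMap.id
            (TensorProduct.map A.t LinearMap.id (Δl x))) = ε₀ x • η₀ := by
  intro x
  constructor
  · have key : ∀ z : G₁ ⊗[k] G₀,
        TensorProduct.lift (LinearMap.mul k G₀)
          (TensorProduct.map LinearMap.id S0
            (TensorProduct.map A.t LinearMap.id z))
        = A.t (TensorProduct.lift (A.actR.compl₂ S0) z) := by
      intro z
      induction z using TensorProduct.induction_on with
      | zero => simp
      | tmul y x' => simp [A.equivR]
      | add a b ha hb => simp [ha, hb]
    rw [key, hant1, map_smul, hη]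
  · have key : ∀ z : G₁ ⊗[k] G₀,
        TensorProduct.lift (LinearMap.mul k G₀)
          (TensorProduct.map S0 LinearMap.id
            (TensorProduct.map A.t LinearMap.id z))
        = A.t (TensorProduct.lift (A.actR ∘ₗ S1) z) := by
      intro z
      induction z using TensorProduct.induction_on with
      | zero => simp
      | tmul y x' =>
        have := congrFun (congrArg (fun f => f.toFun) hS) y
        simp at this
        simp [A.equivR, this]
      | add a b ha hb => simp [ha, hb]
    rw [key, hant2, map_smul, hη]

end
end
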